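/- For every integer m ≥ 1, the set of m-ultra numbers is uncountable. -/

import Mathlib

open Polynomial

/-- The primitive minimal polynomial over ℤ of a real number. -/
noncomputable def intMinpoly (α : ℝ) : Polynomial ℤ :=
  (IsLocalization.integerNormalization (nonZeroDivisors ℤ) (minpoly ℚ α)).primPart

/-- The height of an algebraic number: the maximum of the absolute values of the
coefficients of its primitive minimal polynomial over ℤ. -/
noncomputable def algHeight (α : ℝ) : ℕ :=
  (intMinpoly α).support.sup fun i => ((intMinpoly α).coeff i).natAbs

/-- `α` is a real algebraic number of degree exactly `m`. -/
def DegreeExactly (m : ℕ) (α : ℝ) : Prop :=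
  IsAlgebraic ℚ α ∧ (minpoly ℚ α).natDegree = m

/-- `exp^[3](x) = e^(e^(e^x))`. -/
noncomputable def expCube (x : ℝ) : ℝ := Real.exp (Real.exp (Real.exp x))

/-- `ξ` is an `m`-ultra number: there is a sequence `(α_n)_{n ≥ 1}` of pairwise distinct
real algebraic numbers of degree exactly `m` with
`0 < |ξ - α_n| < (exp^[3](H(α_n)))^{-n}` for all `n ≥ 1`. Here `a k` plays the
role of `α_{k+1}`. -/
def IsMUltra (m : ℕ) (ξ : ℝ) : Prop :=
  ∃ a : ℕ → ℝ, Function.Injective a ∧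
    ∀ n : ℕ, DegreeExactly m (a n) ∧ 0 < |ξ - a n| ∧
      |ξ - a n| < (expCube (algHeight (a n)))⁻¹ ^ (n + 1)

/-- A function `f : ℝ → ℝ` is transcendental if the only complex two-variable polynomial
`P` with `P (x, f x) = 0` for all real `x` is the zero polynomial. -/
def TranscendentalFun (f : ℝ → ℝ) : Prop :=
  ∀ P : MvPolynomial (Fin 2) ℂ,
    (∀ x : ℝ, MvPolynomial.eval ![(x : ℂ), (f x : ℂ)] P = 0) → P = 0

/-! ### Auxiliary material -/

namespace UltraAux

open Finset

/-! #### The degree-`m` algebraic base point `2^(1/m)` -/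

noncomputable def rt (m : ℕ) : ℝ := (2:ℝ) ^ ((m:ℝ)⁻¹)

lemma rt_pow {m : ℕ} (hm : 1 ≤ m) : rt m ^ m = 2 :=
  Real.rpow_inv_natCast_pow (by norm_num) (by omega)

lemma irrZ (m : ℕ) (hm : 1 ≤ m) : Irreducible ((X:ℤ[X])^m - C 2) := by
  apply irreducible_of_eisenstein_criterion (P := Ideal.span {(2:ℤ)})
  · exact Ideal.span_singleton_prime (by norm_num) |>.mpr Int.prime_two
  · rw [(monic_X_pow_sub_C (2:ℤ) (by omega)).leadingCoeff]
    intro h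
    rw [Ideal.mem_span_singleton] at h
    norm_num at h
  · intro n hn
    rw [degree_X_pow_sub_C (by omega) (2:ℤ)] at hn
    rw [coeff_sub, coeff_X_pow, coeff_C]
    have : n ≠ m := by exact_mod_cast hn.ne
    simp only [this, if_false]
    split <;> simp [Ideal.mem_span_singleton]
  · rw [degree_X_pow_sub_C (by omega) (2:ℤ)]
    exact_mod_cast Nat.pos_of_ne_zero (by omega)
  · rw [coeff_sub, coeff_X_pow, coeff_C]
    have : (0:ℕ) ≠ m := by omega
    simp only [this, if_false, if_pos rfl]
    rw [Ideal.span_singleton_pow, Ideal.mem_span_singleton]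
    norm_num
  · exact (monic_X_pow_sub_C (2:ℤ) (by omega)).isPrimitive

lemma irrQ (m : ℕ) (hm : 1 ≤ m) : Irreducible ((X:ℚ[X])^m - C 2) := by
  have h := (IsPrimitive.Int.irreducible_iff_irreducible_map_cast
    ((monic_X_pow_sub_C (2:ℤ) (by omega : m ≠ 0)).isPrimitive)).mp (irrZ m hm)
  simp at h
  convert h using 2
  exact map_ofNat C 2

lemma aeval_rt {m : ℕ} (hm : 1 ≤ m) : (aeval (rt m)) ((X:ℚ[X])^m - C 2) = 0 := by
  simp [rt_pow hm]

lemma minpoly_rt {m : ℕ} (hm : 1 ≤ m) : minpoly ℚ (rt m) = (X:ℚ[X])^m - C 2 :=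
  (minpoly.eq_of_irreducible_of_monic (irrQ m hm) (aeval_rt hm)
    (monic_X_pow_sub_C _ (by omega))).symm

lemma rt_integral {m : ℕ} (hm : 1 ≤ m) : IsIntegral ℚ (rt m) :=
  ⟨(X:ℚ[X])^m - C 2, monic_X_pow_sub_C _ (by omega), by
    have := aeval_rt hm; rwa [aeval_def] at this⟩

lemma minpoly_shift {m : ℕ} (hm : 1 ≤ m) (c : ℚ) :
    minpoly ℚ (rt m + (c:ℝ)) = ((X:ℚ[X])^m - C 2).comp (X - C c) := by
  have h := minpoly.add_algebraMap (A := ℚ) (rt m) c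
  rw [minpoly_rt hm] at h
  simpa using h

lemma shift_integral {m : ℕ} (hm : 1 ≤ m) (c : ℚ) : IsIntegral ℚ (rt m + (c:ℝ)) := by
  have h2 : IsIntegral ℚ ((c:ℚ):ℝ) := by
    have : ((c:ℚ):ℝ) = algebraMap ℚ ℝ c := by norm_num
    rw [this]; exact isIntegral_algebraMap
  exact (rt_integral hm).add (by simpa using h2)

lemma deg_shift {m : ℕ} (hm : 1 ≤ m) (c : ℚ) : DegreeExactly m (rt m + (c:ℝ)) := by
  refine ⟨(shift_integral hm c).isAlgebraic, ?_⟩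
  rw [minpoly_shift hm c, natDegree_comp, natDegree_X_sub_C, mul_one,
    natDegree_X_pow_sub_C]

/-! #### Height bound via any integer polynomial of the right degree -/

lemma coeff_intMinpoly_le {α : ℝ} (hα : IsIntegral ℚ α) (M : ℤ[X]) (hM0 : M ≠ 0)
    (hdeg : M.natDegree = (minpoly ℚ α).natDegree)
    (hroot : Polynomial.aeval α M = 0) (i : ℕ) :
    ((intMinpoly α).coeff i).natAbs ≤ (M.coeff i).natAbs := by
  classical
  set P := minpoly ℚ α with hP
  have hP0 : P ≠ 0 := minpoly.ne_zero hα
  set N := IsLocalization.integerNormalization (nonZeroDivisors ℤ) P with hN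
  obtain ⟨b, hb⟩ := IsLocalization.integerNormalization_map_to_map (nonZeroDivisors ℤ) P
  have hbne : (b : ℤ) ≠ 0 := nonZeroDivisors.coe_ne_zero b
  have hN0 : N ≠ 0 := by
    intro h
    rw [← hN, h, Polynomial.map_zero] at hb
    rcases smul_eq_zero.mp hb.symm with h1 | h2
    · exact hbne h1
    · exact hP0 h2
  have hNmap : N.map (algebraMap ℤ ℚ) = C ((b:ℤ):ℚ) * P := by
    rw [hb]; ext j; simp [coeff_smul, zsmul_eq_mul]
  have hcont : N.content ≠ 0 := by rwa [Ne, content_eq_zero_iff]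
  have hcontQ : ((N.content : ℤ) : ℚ) ≠ 0 := by exact_mod_cast hcont
  have hsplit : N.map (algebraMap ℤ ℚ) =
      C ((N.content : ℚ)) * (N.primPart.map (algebraMap ℤ ℚ)) := by
    conv_lhs => rw [N.eq_C_content_mul_primPart]
    rw [Polynomial.map_mul, map_C]
    norm_num
  set u : ℚ := ((b:ℤ):ℚ) / (N.content:ℚ) with hu_def
  have hu : u ≠ 0 := div_ne_zero (by exact_mod_cast hbne) hcontQ
  have hppmap : N.primPart.map (algebraMap ℤ ℚ) = C u * P := by
    apply mul_left_cancel₀ (a := C ((N.content:ℤ):ℚ)) (by simpa using hcontQ)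
    rw [← hsplit, hNmap, ← mul_assoc, ← C_mul, hu_def,
      mul_comm (((N.content:ℤ):ℚ)) _, div_mul_cancel₀ _ hcontQ]
  have hPdvd : P ∣ M.map (algebraMap ℤ ℚ) := by
    apply minpoly.dvd
    rw [aeval_map_algebraMap]
    exact hroot
  have hppdvdQ : N.primPart.map (algebraMap ℤ ℚ) ∣ M.map (algebraMap ℤ ℚ) := by
    obtain ⟨k, hk⟩ := hPdvd
    exact ⟨C u⁻¹ * k, by
      rw [hk, hppmap, mul_comm (C u) P, mul_assoc, ← mul_assoc (C u), ← C_mul,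
        mul_inv_cancel₀ hu, C_1, one_mul]⟩
  have hMcont : ((M.content : ℤ):ℚ) ≠ 0 := by
    exact_mod_cast (fun h => hM0 (content_eq_zero_iff.mp h))
  have hMsplit : M.map (algebraMap ℤ ℚ) =
      C ((M.content : ℚ)) * (M.primPart.map (algebraMap ℤ ℚ)) := by
    conv_lhs => rw [M.eq_C_content_mul_primPart]
    rw [Polynomial.map_mul, map_C]; norm_num
  have hppdvdQ' : N.primPart.map (algebraMap ℤ ℚ) ∣ M.primPart.map (algebraMap ℤ ℚ) := by
    obtain ⟨k, hk⟩ := hppdvdQ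
    refine ⟨C (((M.content:ℤ):ℚ))⁻¹ * k, ?_⟩
    have : M.primPart.map (algebraMap ℤ ℚ)
        = C (((M.content:ℤ):ℚ))⁻¹ * (M.map (algebraMap ℤ ℚ)) := by
      rw [hMsplit, ← mul_assoc, ← C_mul, inv_mul_cancel₀ hMcont, C_1, one_mul]
    rw [this, hk]; ring
  have hdvd : N.primPart ∣ M :=
    dvd_trans ((IsPrimitive.Int.dvd_iff_map_cast_dvd_map_cast _ _
      (isPrimitive_primPart N)).mpr (by
        simpa [algebraMap_int_eq] using hppdvdQ')) (primPart_dvd M)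
  obtain ⟨k, hk⟩ := hdvd
  have hk0 : k ≠ 0 := by rintro rfl; rw [mul_zero] at hk; exact hM0 hk
  have hpp0 : N.primPart ≠ 0 := primPart_ne_zero N
  have hdegpp : N.primPart.natDegree = P.natDegree := by
    have h1 : (N.primPart.map (algebraMap ℤ ℚ)).natDegree = N.primPart.natDegree :=
      natDegree_map_eq_of_injective (algebraMap ℤ ℚ).injective_int _
    rw [← h1, hppmap, natDegree_C_mul hu]
  have hkdeg : k.natDegree = 0 := by
    have := natDegree_mul hpp0 hk0
    rw [← hk, hdeg, ← hdegpp] at this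
    omega
  obtain ⟨a, rfl⟩ : ∃ a, k = C a := ⟨k.coeff 0, eq_C_of_natDegree_eq_zero hkdeg⟩
  have ha : a ≠ 0 := fun h => hk0 (by rw [h, C_0])
  have hcoeff : M.coeff i = (intMinpoly α).coeff i * a := by
    rw [hk, coeff_mul_C]; rfl
  rw [hcoeff, Int.natAbs_mul]
  exact Nat.le_mul_of_pos_right _ (Int.natAbs_pos.mpr ha)

lemma algHeight_le {α : ℝ} (hα : IsIntegral ℚ α) (M : ℤ[X]) (hM0 : M ≠ 0)
    (hdeg : M.natDegree = (minpoly ℚ α).natDegree)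
    (hroot : Polynomial.aeval α M = 0) (B : ℕ)
    (hB : ∀ i, (M.coeff i).natAbs ≤ B) : algHeight α ≤ B :=
  Finset.sup_le fun i _ => le_trans (coeff_intMinpoly_le hα M hM0 hdeg hroot i) (hB i)

/-! #### The explicit integer polynomial annihilating `2^(1/m) + p/q` -/

noncomputable def Mpoly (m p q : ℕ) : ℤ[X] :=
  (∑ j ∈ Finset.range (m+1), C ((m.choose j : ℤ) * (q:ℤ)^j * (-(p:ℤ))^(m-j)) * X^j)
    - C (2*(q:ℤ)^m)

lemma Mpoly_coeff (m p q : ℕ) (i : ℕ) (hi : i ≤ m) :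
    (Mpoly m p q).coeff i = (m.choose i : ℤ) * (q:ℤ)^i * (-(p:ℤ))^(m-i)
      - (if i = 0 then 2*(q:ℤ)^m else 0) := by
  rw [Mpoly, coeff_sub, finset_sum_coeff]
  congr 1
  · rw [Finset.sum_eq_single i]
    · rw [coeff_C_mul, coeff_X_pow, if_pos rfl, mul_one]
    · intro j _ hji
      rw [coeff_C_mul, coeff_X_pow, if_neg (Ne.symm hji), mul_zero]
    · intro h
      exact absurd (Finset.mem_range.mpr (by omega)) h
  · rw [coeff_C]

lemma Mpoly_coeff_top (m p q : ℕ) (hm : 1 ≤ m) :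
    (Mpoly m p q).coeff m = (q:ℤ)^m := by
  rw [Mpoly_coeff m p q m le_rfl, if_neg (by omega), Nat.choose_self, Nat.sub_self]
  ring

lemma Mpoly_natDegree (m p q : ℕ) (hm : 1 ≤ m) (hq : 0 < q) :
    (Mpoly m p q).natDegree = m := by
  have hne : (Mpoly m p q).coeff m ≠ 0 := by
    rw [Mpoly_coeff_top m p q hm]
    positivity
  refine le_antisymm ?_ (le_natDegree_of_ne_zero hne)
  rw [Mpoly]
  refine le_trans (natDegree_sub_le _ _) ?_
  simp only [natDegree_C, max_le_iff]
  constructor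
  · refine le_trans (natDegree_sum_le _ _) ?_
    rw [Finset.fold_max_le]
    refine ⟨Nat.zero_le _, fun j hj => ?_⟩
    exact le_trans (natDegree_C_mul_X_pow_le _ _) (by simp at hj; omega)
  · omega

lemma Mpoly_ne_zero (m p q : ℕ) (hm : 1 ≤ m) (hq : 0 < q) : Mpoly m p q ≠ 0 := by
  intro h
  have := Mpoly_coeff_top m p q hm
  rw [h, coeff_zero] at this
  have : (0:ℤ) < (q:ℤ)^m := by positivity
  omega

lemma Mpoly_root (m p q : ℕ) (hm : 1 ≤ m) (hq : 0 < q) :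
    Polynomial.aeval (rt m + (p:ℝ)/(q:ℝ)) (Mpoly m p q) = 0 := by
  set α : ℝ := rt m + (p:ℝ)/(q:ℝ)
  have hq0 : (q:ℝ) ≠ 0 := by positivity
  have key : (q:ℝ)*α + (-(p:ℝ)) = q * rt m := by rw [show α = rt m + (p:ℝ)/(q:ℝ) from rfl]; field_simp; ring
  rw [Mpoly, map_sub, map_sum]
  have hterm : ∀ j, Polynomial.aeval α (C ((m.choose j : ℤ) * (q:ℤ)^j * (-(p:ℤ))^(m-j)) * X^j)
      = ((q:ℝ)*α)^j * (-(p:ℝ))^(m-j) * (m.choose j : ℝ) := by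
    intro j
    rw [map_mul, map_pow, aeval_X, aeval_C, mul_pow]
    push_cast
    ring
  rw [Finset.sum_congr rfl (fun j _ => hterm j), ← add_pow ((q:ℝ)*α) (-(p:ℝ)) m, key,
    mul_pow, rt_pow hm, aeval_C]
  push_cast
  ring_nf
  norm_num

lemma Mpoly_coeff_bound (m p q : ℕ) (hm : 1 ≤ m) (hq : 0 < q) (hp : p ≤ 2*q) (i : ℕ) :
    ((Mpoly m p q).coeff i).natAbs ≤ 3*(3*q)^m := by
  rcases le_or_gt i m with hi | hi
  · rw [Mpoly_coeff m p q i hi]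
    have h1 : ((m.choose i : ℤ) * (q:ℤ)^i * (-(p:ℤ))^(m-i)).natAbs
        = m.choose i * q^i * p^(m-i) := by
      rw [Int.natAbs_mul, Int.natAbs_mul, Int.natAbs_pow, Int.natAbs_pow, Int.natAbs_neg]
      simp
    have h2 : ((if i = 0 then 2*(q:ℤ)^m else 0)).natAbs ≤ 2 * q^m := by
      split
      · rw [Int.natAbs_mul, Int.natAbs_pow]; simp
      · simp
    refine le_trans (Int.natAbs_sub_le _ _) ?_
    rw [h1]
    have hsum : m.choose i * q^i * p^(m-i) ≤ (q+p)^m := by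
      rw [add_pow]
      calc m.choose i * q^i * p^(m-i) = q^i * p^(m-i) * m.choose i := by ring
      _ ≤ ∑ k ∈ Finset.range (m+1), q^k * p^(m-k) * m.choose k :=
          Finset.single_le_sum (f := fun k => q^k * p^(m-k) * m.choose k)
            (fun k _ => Nat.zero_le _) (Finset.mem_range.mpr (by omega))
    have h3 : (q+p)^m ≤ (3*q)^m := Nat.pow_le_pow_left (by omega) m
    have h4 : q^m ≤ (3*q)^m := Nat.pow_le_pow_left (by omega) m
    calc m.choose i * q^i * p^(m-i) + ((if i = 0 then 2*(q:ℤ)^m else 0)).natAbs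
        ≤ (3*q)^m + 2 * (3*q)^m := by omega
      _ = 3*(3*q)^m := by ring
  · rw [coeff_eq_zero_of_natDegree_lt (by rw [Mpoly_natDegree m p q hm hq]; omega)]
    simp

/-! #### `expCube` basics -/

lemma expCube_pos (x : ℝ) : 0 < expCube x := Real.exp_pos _

lemma one_le_expCube (x : ℝ) : 1 ≤ expCube x :=
  Real.one_le_exp (le_of_lt (Real.exp_pos _))

lemma expCube_mono {x y : ℝ} (h : x ≤ y) : expCube x ≤ expCube y :=
  Real.exp_le_exp.mpr (Real.exp_le_exp.mpr (Real.exp_le_exp.mpr h))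

/-! #### The rapidly growing denominators -/

noncomputable def Fac (m n d : ℕ) : ℕ :=
  ⌈(4:ℝ) * expCube ((3*(3*d)^m : ℕ)) ^ (n+1)⌉₊ + 2

lemma Fac_gt (m n d : ℕ) :
    (4:ℝ) * expCube ((3*(3*d)^m : ℕ)) ^ (n+1) < (Fac m n d : ℝ) := by
  have h := Nat.le_ceil ((4:ℝ) * expCube ((3*(3*d)^m : ℕ)) ^ (n+1))
  have : (Fac m n d : ℝ) = (⌈(4:ℝ) * expCube ((3*(3*d)^m : ℕ)) ^ (n+1)⌉₊ : ℝ) + 2 := by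
    rw [Fac]; push_cast; ring
  rw [this]
  linarith

lemma Fac_ge_six (m n d : ℕ) : 6 ≤ Fac m n d := by
  have h1 : (1:ℝ) ≤ expCube ((3*(3*d)^m : ℕ)) ^ (n+1) :=
    one_le_pow₀ (one_le_expCube _)
  have h4 : (4:ℝ) ≤ (4:ℝ) * expCube ((3*(3*d)^m : ℕ)) ^ (n+1) := by linarith
  have : 3 < ⌈(4:ℝ) * expCube ((3*(3*d)^m : ℕ)) ^ (n+1)⌉₊ := by
    rw [Nat.lt_ceil]
    refine lt_of_lt_of_le ?_ h4
    norm_num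
  rw [Fac]; omega

noncomputable def Dd (m : ℕ) : ℕ → ℕ
  | 0 => 2
  | n+1 => Dd m n * Fac m n (Dd m n)

lemma Dd_ge_two (m n : ℕ) : 2 ≤ Dd m n := by
  induction n with
  | zero => simp [Dd]
  | succ k ih =>
    rw [Dd]
    have := Fac_ge_six m k (Dd m k)
    nlinarith

lemma Dd_pos (m n : ℕ) : 0 < Dd m n := lt_of_lt_of_le (by norm_num) (Dd_ge_two m n)

lemma Dd_dvd_succ (m n : ℕ) : Dd m n ∣ Dd m (n+1) := ⟨Fac m n (Dd m n), rfl⟩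

lemma Dd_dvd (m : ℕ) {k n : ℕ} (h : k ≤ n) : Dd m k ∣ Dd m n := by
  induction n with
  | zero => rw [Nat.le_zero.mp h]
  | succ j ih =>
    rcases Nat.lt_or_ge k (j+1) with h' | h'
    · exact dvd_trans (ih (by omega)) (Dd_dvd_succ m j)
    · rw [show k = j+1 by omega]

lemma Dd_succ_ge (m n : ℕ) : 2 * Dd m n ≤ Dd m (n+1) := by
  rw [Dd]
  have := Fac_ge_six m n (Dd m n)
  nlinarith [Dd_pos m n]

lemma Dd_growth (m n k : ℕ) : 2^k * Dd m n ≤ Dd m (n+k) := by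
  induction k with
  | zero => simp
  | succ j ih =>
    have h1 := Dd_succ_ge m (n+j)
    calc 2^(j+1) * Dd m n = 2 * (2^j * Dd m n) := by ring
    _ ≤ 2 * Dd m (n+j) := by omega
    _ ≤ Dd m (n+j+1) := h1
    _ = Dd m (n+(j+1)) := by ring_nf

lemma Dd_ge_pow (m n : ℕ) : 2^(n+1) ≤ Dd m n := by
  have := Dd_growth m 0 n
  simp only [Nat.zero_add] at this
  calc 2^(n+1) = 2^n * 2 := by ring
  _ ≤ Dd m n := by simpa [Dd, mul_comm] using this

lemma Dd_succ_gt_expCube (m n : ℕ) :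
    (4:ℝ) * expCube ((3*(3*Dd m n)^m : ℕ)) ^ (n+1) < (Dd m (n+1) : ℝ) := by
  have h1 := Fac_gt m n (Dd m n)
  have h2 : (Fac m n (Dd m n) : ℝ) ≤ (Dd m (n+1) : ℝ) := by
    have : Fac m n (Dd m n) ≤ Dd m (n+1) := by
      rw [Dd]
      exact Nat.le_mul_of_pos_left _ (Dd_pos m n)
    exact_mod_cast this
  linarith

lemma Dd_succ_gt_four (m n : ℕ) : 4 * Dd m n < Dd m (n+1) := by
  rw [Dd]
  have := Fac_ge_six m n (Dd m n)
  nlinarith [Dd_pos m n]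

/-! #### The sequences attached to a boolean sequence -/

def eps (σ : ℕ → Bool) (k : ℕ) : ℕ := if σ k then 2 else 1

lemma eps_pos (σ : ℕ → Bool) (k : ℕ) : 1 ≤ eps σ k := by
  rw [eps]; split <;> norm_num

lemma eps_le (σ : ℕ → Bool) (k : ℕ) : eps σ k ≤ 2 := by
  rw [eps]; split <;> norm_num

noncomputable def term (m : ℕ) (σ : ℕ → Bool) (k : ℕ) : ℝ :=
  (eps σ k : ℝ) / (Dd m k : ℝ)

lemma term_pos (m : ℕ) (σ : ℕ → Bool) (k : ℕ) : 0 < term m σ k := by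
  apply div_pos
  · exact_mod_cast eps_pos σ k
  · exact_mod_cast Dd_pos m k

lemma term_le_geom (m : ℕ) (σ : ℕ → Bool) (k : ℕ) : term m σ k ≤ (1/2:ℝ)^k := by
  rw [term]
  have h1 : (eps σ k : ℝ) ≤ 2 := by exact_mod_cast eps_le σ k
  have h2 : (2:ℝ)^(k+1) ≤ (Dd m k : ℝ) := by exact_mod_cast Dd_ge_pow m k
  have h3 : (0:ℝ) < 2^(k+1) := by positivity
  have h4 : (0:ℝ) < (Dd m k : ℝ) := by exact_mod_cast Dd_pos m k
  calc (eps σ k : ℝ) / (Dd m k : ℝ) ≤ 2 / (2:ℝ)^(k+1) :=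
        div_le_div₀ (by norm_num) h1 h3 h2
  _ = (1/2:ℝ)^k := by
        rw [div_pow, one_pow, pow_succ]
        ring

lemma term_summable (m : ℕ) (σ : ℕ → Bool) : Summable (term m σ) :=
  Summable.of_nonneg_of_le (fun k => (term_pos m σ k).le) (term_le_geom m σ)
    summable_geometric_two

lemma term_shift_le (m : ℕ) (σ : ℕ → Bool) (n k : ℕ) :
    term m σ (k + n) ≤ (2 / Dd m n) * (1/2:ℝ)^k := by
  have hDn : (0:ℝ) < (Dd m n : ℝ) := by exact_mod_cast Dd_pos m n
  have hgrow : (2:ℝ)^k * (Dd m n : ℝ) ≤ (Dd m (n+k) : ℝ) := by exact_mod_cast Dd_growth m n k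
  have h2 : (0:ℝ) < (2:ℝ)^k * (Dd m n : ℝ) := by positivity
  have heps : (eps σ (k+n) : ℝ) ≤ 2 := by exact_mod_cast eps_le σ (k+n)
  have hD : (0:ℝ) < (Dd m (k+n) : ℝ) := by exact_mod_cast Dd_pos m (k+n)
  rw [term]
  calc (eps σ (k+n) : ℝ) / (Dd m (k+n) : ℝ)
      ≤ 2 / ((2:ℝ)^k * (Dd m n : ℝ)) := by
        rw [Nat.add_comm n k] at hgrow
        exact div_le_div₀ (by norm_num) heps h2 hgrow
  _ = (2 / Dd m n) * (1/2:ℝ)^k := by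
        rw [div_pow, one_pow]
        field_simp

lemma tail_le (m : ℕ) (σ : ℕ → Bool) (n : ℕ) :
    (∑' k, term m σ (k + n)) ≤ 4 / Dd m n := by
  have hs1 : Summable (fun k => term m σ (k + n)) :=
    ((summable_nat_add_iff n).mpr (term_summable m σ))
  have hs2 : Summable (fun k : ℕ => (2 / (Dd m n : ℝ)) * (1/2:ℝ)^k) :=
    summable_geometric_two.mul_left _
  calc (∑' k, term m σ (k + n)) ≤ ∑' k : ℕ, (2 / (Dd m n : ℝ)) * (1/2:ℝ)^k :=
        Summable.tsum_le_tsum (term_shift_le m σ n) hs1 hs2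
  _ = (2 / (Dd m n : ℝ)) * 2 := by rw [tsum_mul_left, tsum_geometric_two]
  _ = 4 / Dd m n := by ring

lemma tail_pos (m : ℕ) (σ : ℕ → Bool) (n : ℕ) : 0 < ∑' k, term m σ (k + n) := by
  have hs1 : Summable (fun k => term m σ (k + n)) :=
    ((summable_nat_add_iff n).mpr (term_summable m σ))
  exact Summable.tsum_pos hs1 (fun k => (term_pos m σ _).le) 0 (term_pos m σ _)

noncomputable def LL (m : ℕ) (σ : ℕ → Bool) : ℝ := ∑' k, term m σ k

noncomputable def SS (m : ℕ) (σ : ℕ → Bool) (j : ℕ) : ℝ :=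
  ∑ k ∈ Finset.range j, term m σ k

lemma LL_split (m : ℕ) (σ : ℕ → Bool) (j : ℕ) :
    LL m σ = SS m σ j + ∑' k, term m σ (k + j) := by
  rw [LL, SS, ← Summable.sum_add_tsum_nat_add j (term_summable m σ)]

lemma SS_lt_two (m : ℕ) (σ : ℕ → Bool) (j : ℕ) : SS m σ j ≤ 2 := by
  rw [SS]
  calc ∑ k ∈ Finset.range j, term m σ k ≤ ∑ k ∈ Finset.range j, (1/2:ℝ)^k :=
        Finset.sum_le_sum (fun k _ => term_le_geom m σ k)
  _ ≤ ∑' k : ℕ, (1/2:ℝ)^k :=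
        Summable.sum_le_tsum _ (fun k _ => by positivity) summable_geometric_two
  _ = 2 := tsum_geometric_two

/-! #### The numerator of the partial sums -/

noncomputable def pnum (m : ℕ) (σ : ℕ → Bool) (n : ℕ) : ℕ :=
  ∑ k ∈ Finset.range (n+1), eps σ k * (Dd m n / Dd m k)

lemma SS_eq (m : ℕ) (σ : ℕ → Bool) (n : ℕ) :
    SS m σ (n+1) = (pnum m σ n : ℝ) / (Dd m n : ℝ) := by
  rw [SS, pnum]
  push_cast
  rw [Finset.sum_div]
  refine Finset.sum_congr rfl (fun k hk => ?_)
  have hk' : k ≤ n := by simp at hk; omega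
  have hdvd := Dd_dvd m hk'
  have hknz : ((Dd m k : ℕ):ℝ) ≠ 0 := by
    have := Dd_pos m k; positivity
  have hnnz : ((Dd m n : ℕ):ℝ) ≠ 0 := by
    have := Dd_pos m n; positivity
  rw [term, Nat.cast_div hdvd hknz]
  field_simp

lemma pnum_le (m : ℕ) (σ : ℕ → Bool) (n : ℕ) : pnum m σ n ≤ 2 * Dd m n := by
  have h := SS_lt_two m σ (n+1)
  rw [SS_eq m σ n] at h
  have hD : (0:ℝ) < (Dd m n : ℝ) := by exact_mod_cast Dd_pos m n
  have : (pnum m σ n : ℝ) ≤ 2 * (Dd m n : ℝ) := by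
    rw [div_le_iff₀ hD] at h
    linarith
  exact_mod_cast this

/-! #### The number `ξ_σ` -/

noncomputable def xi (m : ℕ) (σ : ℕ → Bool) : ℝ := rt m + LL m σ

lemma four_div_lt {E D : ℝ} (j : ℕ) (hE : 0 < E) (hD : 0 < D) (h : 4 * E ^ j < D) :
    4 / D < E⁻¹ ^ j := by
  have hEj : 0 < E ^ j := pow_pos hE j
  have h1 : 4 / D < 1 / E ^ j := by
    rw [div_lt_div_iff₀ hD hEj]
    linarith
  simpa [inv_pow, one_div] using h1

lemma inv_pow_antitone {E F : ℝ} (j : ℕ) (hE : 0 < E) (hEF : E ≤ F) : F⁻¹ ^ j ≤ E⁻¹ ^ j := by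
  have hF : 0 < F := lt_of_lt_of_le hE hEF
  apply pow_le_pow_left₀ (by positivity)
  exact inv_anti₀ hE hEF

lemma xi_isMUltra {m : ℕ} (hm : 1 ≤ m) (σ : ℕ → Bool) : IsMUltra m (xi m σ) := by
  refine ⟨fun n => rt m + SS m σ (n+1), ?_, ?_⟩
  · have hmono : StrictMono (fun n => SS m σ (n+1)) := by
      apply strictMono_nat_of_lt_succ
      intro n
      have : SS m σ (n+2) = SS m σ (n+1) + term m σ (n+1) := by
        rw [SS, SS, Finset.sum_range_succ]
      rw [this]
      have := term_pos m σ (n+1)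
      linarith
    intro a b hab
    exact hmono.injective (by dsimp at hab; linarith)
  · intro n
    have hD : (0:ℝ) < (Dd m n : ℝ) := by exact_mod_cast Dd_pos m n
    set c : ℚ := (pnum m σ n : ℚ) / (Dd m n : ℚ) with hc
    have hrat : ((c:ℚ):ℝ) = (pnum m σ n : ℝ) / (Dd m n : ℝ) := by
      rw [hc]; push_cast; ring
    have han : rt m + SS m σ (n+1) = rt m + (c:ℝ) := by
      rw [SS_eq m σ n, hrat]
    have hdeg : DegreeExactly m (rt m + SS m σ (n+1)) := by
      rw [han]; exact deg_shift hm _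
    have htail : xi m σ - (rt m + SS m σ (n+1)) = ∑' k, term m σ (k + (n+1)) := by
      rw [xi, LL_split m σ (n+1)]; ring
    refine ⟨hdeg, ?_, ?_⟩
    · rw [htail, abs_of_pos (tail_pos m σ (n+1))]
      exact tail_pos m σ (n+1)
    · rw [htail, abs_of_pos (tail_pos m σ (n+1))]
      -- the height bound
      have hroot : Polynomial.aeval (rt m + SS m σ (n+1)) (Mpoly m (pnum m σ n) (Dd m n)) = 0 := by
        rw [SS_eq m σ n]
        exact Mpoly_root m (pnum m σ n) (Dd m n) hm (Dd_pos m n)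
      have hint : IsIntegral ℚ (rt m + SS m σ (n+1)) := by
        rw [han]; exact shift_integral hm _
      have hdeg' : (Mpoly m (pnum m σ n) (Dd m n)).natDegree
          = (minpoly ℚ (rt m + SS m σ (n+1))).natDegree := by
        rw [Mpoly_natDegree m _ _ hm (Dd_pos m n), hdeg.2]
      have hheight : algHeight (rt m + SS m σ (n+1)) ≤ 3*(3*Dd m n)^m :=
        algHeight_le hint _ (Mpoly_ne_zero m _ _ hm (Dd_pos m n)) hdeg' hroot _
          (Mpoly_coeff_bound m _ _ hm (Dd_pos m n) (pnum_le m σ n))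
      -- comparison chain
      have hEB : expCube (algHeight (rt m + SS m σ (n+1)))
          ≤ expCube ((3*(3*Dd m n)^m : ℕ)) :=
        expCube_mono (by exact_mod_cast hheight)
      have hE1 : (1:ℝ) ≤ expCube (algHeight (rt m + SS m σ (n+1))) := one_le_expCube _
      have hgt := Dd_succ_gt_expCube m n
      have hDn1 : (0:ℝ) < (Dd m (n+1) : ℝ) := by exact_mod_cast Dd_pos m (n+1)
      have hEpos : (0:ℝ) < expCube ((3*(3*Dd m n)^m : ℕ)) := expCube_pos _
      have step1 : (∑' k, term m σ (k + (n+1))) ≤ 4 / Dd m (n+1) := tail_le m σ (n+1)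
      have step2 : 4 / (Dd m (n+1) : ℝ) < (expCube ((3*(3*Dd m n)^m : ℕ)))⁻¹ ^ (n+1) :=
        four_div_lt (n+1) hEpos hDn1 (by linarith)
      have step3 : (expCube ((3*(3*Dd m n)^m : ℕ)))⁻¹ ^ (n+1)
          ≤ (expCube (algHeight (rt m + SS m σ (n+1))))⁻¹ ^ (n+1) :=
        inv_pow_antitone (n+1) (by linarith) hEB
      calc (∑' k, term m σ (k + (n+1))) ≤ 4 / Dd m (n+1) := step1
      _ < (expCube ((3*(3*Dd m n)^m : ℕ)))⁻¹ ^ (n+1) := step2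
      _ ≤ _ := step3

lemma xi_injective (m : ℕ) : Function.Injective (xi m) := by
  intro σ τ h
  by_contra hne
  have hex : ∃ k, σ k ≠ τ k := by
    by_contra hall
    push_neg at hall
    exact hne (funext hall)
  classical
  set n := Nat.find hex with hn
  have hdiff : σ n ≠ τ n := Nat.find_spec hex
  have hagree : ∀ k < n, σ k = τ k := fun k hk => by
    by_contra hkk
    exact Nat.find_min hex hk hkk
  have hSS : SS m σ n = SS m τ n := by
    rw [SS, SS]
    exact Finset.sum_congr rfl (fun k hk => by
      rw [term, term, eps, eps, hagree k (Finset.mem_range.mp hk)])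
  have hLLs : LL m σ = LL m τ := by
    have : rt m + LL m σ = rt m + LL m τ := h
    linarith
  have hsplitσ : LL m σ = SS m σ n + term m σ n + ∑' k, term m σ (k + (n+1)) := by
    rw [LL_split m σ (n+1)]
    congr 1
    rw [SS, SS, Finset.sum_range_succ]
  have hsplitτ : LL m τ = SS m τ n + term m τ n + ∑' k, term m τ (k + (n+1)) := by
    rw [LL_split m τ (n+1)]
    congr 1
    rw [SS, SS, Finset.sum_range_succ]
  -- |term difference| = 1/Dd m n
  have hD : (0:ℝ) < (Dd m n : ℝ) := by exact_mod_cast Dd_pos m n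
  have htermdiff : |term m σ n - term m τ n| = 1 / Dd m n := by
    rw [term, term, div_sub_div_same, abs_div, abs_of_pos hD]
    congr 1
    rw [eps, eps]
    rcases Bool.eq_false_or_eq_true (σ n) with h1 | h1 <;>
      rcases Bool.eq_false_or_eq_true (τ n) with h2 | h2 <;>
      simp [h1, h2] at hdiff ⊢ <;> norm_num
  -- tails are small
  have hDn1 : (0:ℝ) < (Dd m (n+1) : ℝ) := by exact_mod_cast Dd_pos m (n+1)
  have htails : |(∑' k, term m σ (k + (n+1))) - ∑' k, term m τ (k + (n+1))| < 4 / Dd m (n+1) := by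
    have h1 := tail_pos m σ (n+1)
    have h2 := tail_pos m τ (n+1)
    have h3 := tail_le m σ (n+1)
    have h4 := tail_le m τ (n+1)
    rw [abs_lt]
    constructor <;> nlinarith
  have hkey : term m σ n - term m τ n
      = (∑' k, term m τ (k + (n+1))) - ∑' k, term m σ (k + (n+1)) := by
    have := hLLs
    rw [hsplitσ, hsplitτ, hSS] at this
    linarith
  have h4lt : 4 / (Dd m (n+1) : ℝ) < 1 / Dd m n := by
    rw [div_lt_div_iff₀ hDn1 hD]
    have := Dd_succ_gt_four m n
    have : (4 * Dd m n : ℝ) < (Dd m (n+1) : ℝ) := by exact_mod_cast this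
    linarith
  have : (1:ℝ) / Dd m n < 4 / Dd m (n+1) := by
    rw [← htermdiff, hkey, abs_sub_comm]
    exact htails
  linarith

end UltraAux

/-- The set of `m`-ultra numbers is uncountable. -/
theorem stmt_4 (m : ℕ) (hm : 1 ≤ m) :
    ¬ Set.Countable {ξ : ℝ | IsMUltra m ξ} := by
  classical
  intro hc
  have hsub : Set.range (UltraAux.xi m) ⊆ {ξ | IsMUltra m ξ} := by
    rintro _ ⟨σ, rfl⟩
    exact UltraAux.xi_isMUltra hm σ
  have h2 : (Set.range (UltraAux.xi m)).Countable := hc.mono hsub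
  have h3 : Countable (Set.range (UltraAux.xi m)) := h2.to_subtype
  have hcount : Countable (ℕ → Bool) := by
    refine Function.Injective.countable
      (f := fun σ => (⟨UltraAux.xi m σ, Set.mem_range_self σ⟩ : Set.range (UltraAux.xi m))) ?_
    intro a b hab
    exact UltraAux.xi_injective m (congrArg Subtype.val hab)
  have hsetinj : Function.Injective (fun (s : Set ℕ) (n : ℕ) => if n ∈ s then true else false) := by
    intro s t hst
    ext n
    have := congrFun hst n
    by_cases hs : n ∈ s <;> by_cases ht : n ∈ t <;> simp [hs, ht] at this ⊢
  have : Countable (Set ℕ) := hsetinj.countable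
  obtain ⟨g, hg⟩ := Countable.exists_injective_nat (Set ℕ)
  exact Function.cantor_injective g hg
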